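/- arXiv:2005.10815 — 2 statements merged into one kernel-verified Lean document; each statement's English description precedes it below -/
import Mathlib

section
/- If N : [0,∞) → [0,∞) and R : [0,∞) → [0,∞) are differentiable, R is nonincreasing, and (d/dt)√(N(t)) ≤ |dR/dt|^{1/2} for all t > 0, then lim_{t→∞} N(t)/t = 0. -/
open Real Filter Topology

lemma sqrt_le_half_add (ε x : ℝ) (hε : 0 < ε) (hx : 0 ≤ x) :
    Real.sqrt x ≤ ε / 2 + x / (2 * ε) := by
  rw [show ε / 2 + x / (2 * ε) = (ε ^ 2 + x) / (2 * ε) by field_simp,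
    le_div_iff₀ (by positivity)]
  nlinarith [Real.sq_sqrt hx, sq_nonneg (Real.sqrt x - ε)]

lemma key_lemma (N R : ℝ → ℝ)
    (hN0 : ∀ t, 0 ≤ N t)
    (hNdiff : Differentiable ℝ N) (hRdiff : Differentiable ℝ R)
    (hRmono : Antitone R)
    (hdissip : ∀ t > (0 : ℝ),
      deriv (fun s => Real.sqrt (N s)) t ≤ Real.sqrt |deriv R t|)
    (ε : ℝ) (hε : 0 < ε) (s t : ℝ) (hs : 0 < s) (hst : s ≤ t) :
    Real.sqrt (N t) ≤ Real.sqrt (N s) + ε * (t - s) / 2 + (R s - R t) / (2 * ε) := by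
  have hR' : ∀ x, deriv R x ≤ 0 := by
    intro x
    have h := (hRdiff x).hasDerivAt
    have h2 : Tendsto (slope R x) (𝓝[>] x) (𝓝 (deriv R x)) :=
      (hasDerivAt_iff_tendsto_slope.1 h).mono_left
        (nhdsWithin_mono x fun y hy => ne_of_gt hy)
    refine le_of_tendsto h2 ?_
    filter_upwards [self_mem_nhdsWithin] with y hy
    have hxy : x < y := hy
    have hRyx : R y ≤ R x := hRmono (le_of_lt hxy)
    rw [slope_def_field]
    exact div_nonpos_of_nonpos_of_nonneg (by linarith) (by linarith)
  refine le_of_forall_pos_le_add ?_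
  intro δ hδ
  set F : ℝ → ℝ := fun u =>
    Real.sqrt (N u + δ ^ 2) - (ε * u / 2 - R u / (2 * ε)) with hF
  have hpos : ∀ u, 0 < N u + δ ^ 2 := fun u => by
    have := hN0 u; have := pow_pos hδ 2; linarith
  have hFd : ∀ x, HasDerivAt F
      (deriv N x / (2 * Real.sqrt (N x + δ ^ 2)) - (ε / 2 - deriv R x / (2 * ε))) x := by
    intro x
    have hG : HasDerivAt (fun u => Real.sqrt (N u + δ ^ 2))
        (deriv N x / (2 * Real.sqrt (N x + δ ^ 2))) x :=
      ((hNdiff x).hasDerivAt.add_const _).sqrt (hpos x).ne'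
    have hM : HasDerivAt (fun u => ε * u / 2 - R u / (2 * ε)) (ε / 2 - deriv R x / (2 * ε)) x := by
      have h1 : HasDerivAt (fun u : ℝ => ε * u / 2) (ε / 2) x := by
        have := ((hasDerivAt_id x).const_mul ε).div_const 2
        simpa using this
      exact h1.sub ((hRdiff x).hasDerivAt.div_const (2 * ε))
    exact hG.sub hM
  have hanti : AntitoneOn F (Set.Ici s) := by
    refine antitoneOn_of_deriv_nonpos (convex_Ici s)
      (fun x _ => ((hFd x).differentiableAt).continuousAt.continuousWithinAt)
      (fun x _ => ((hFd x).differentiableAt).differentiableWithinAt) ?_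
    intro x hx
    rw [interior_Ici] at hx
    have hx0 : 0 < x := hs.trans hx
    rw [(hFd x).deriv]
    have hRHS : 0 ≤ ε / 2 - deriv R x / (2 * ε) := by
      have := hR' x
      have h2 : deriv R x / (2 * ε) ≤ 0 :=
        div_nonpos_of_nonpos_of_nonneg this (by linarith)
      linarith
    rcases eq_or_lt_of_le (hN0 x) with hNx | hNx
    · have : deriv N x = 0 := by
        have hmin : IsLocalMin N x := by
          refine Filter.Eventually.of_forall fun y => ?_
          rw [← hNx]; exact hN0 y
        exact hmin.deriv_eq_zero
      rw [this]
      simp only [zero_div]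
      linarith
    · -- N x > 0
      have hsq : HasDerivAt (fun u => Real.sqrt (N u))
          (deriv N x / (2 * Real.sqrt (N x))) x :=
        (hNdiff x).hasDerivAt.sqrt hNx.ne'
      have hd := hdissip x hx0
      rw [hsq.deriv] at hd
      have habs : |deriv R x| = -deriv R x := abs_of_nonpos (hR' x)
      have hbound : Real.sqrt |deriv R x| ≤ ε / 2 - deriv R x / (2 * ε) := by
        have := sqrt_le_half_add ε (-deriv R x) hε (by linarith [hR' x])
        rw [habs]
        calc Real.sqrt (-deriv R x) ≤ ε / 2 + (-deriv R x) / (2 * ε) := this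
          _ = ε / 2 - deriv R x / (2 * ε) := by ring
      rcases le_or_gt (deriv N x) 0 with hdN | hdN
      · have : deriv N x / (2 * Real.sqrt (N x + δ ^ 2)) ≤ 0 :=
          div_nonpos_of_nonpos_of_nonneg hdN (by positivity)
        linarith
      · have hsx : 0 < Real.sqrt (N x) := Real.sqrt_pos.2 hNx
        have hsx2 : Real.sqrt (N x) ≤ Real.sqrt (N x + δ ^ 2) :=
          Real.sqrt_le_sqrt (by nlinarith)
        have : deriv N x / (2 * Real.sqrt (N x + δ ^ 2)) ≤
            deriv N x / (2 * Real.sqrt (N x)) := by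
          apply div_le_div_of_nonneg_left (le_of_lt hdN) (by positivity)
          linarith
        linarith
  have hFts := hanti (Set.self_mem_Ici) (show t ∈ Set.Ici s from hst) hst
  simp only [hF] at hFts
  have h1 : Real.sqrt (N t) ≤ Real.sqrt (N t + δ ^ 2) :=
    Real.sqrt_le_sqrt (by nlinarith)
  have h2 : Real.sqrt (N s + δ ^ 2) ≤ Real.sqrt (N s) + δ := by
    have hle : N s + δ ^ 2 ≤ (Real.sqrt (N s) + δ) ^ 2 := by
      nlinarith [Real.sq_sqrt (hN0 s), Real.sqrt_nonneg (N s)]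
    calc Real.sqrt (N s + δ ^ 2) ≤ Real.sqrt ((Real.sqrt (N s) + δ) ^ 2) :=
          Real.sqrt_le_sqrt hle
      _ = Real.sqrt (N s) + δ := by
          rw [Real.sqrt_sq (by positivity)]
  have : Real.sqrt (N t) ≤ Real.sqrt (N s) + δ + (ε * t / 2 - R t / (2 * ε))
      - (ε * s / 2 - R s / (2 * ε)) := by linarith
  calc Real.sqrt (N t) ≤ Real.sqrt (N s) + δ + (ε * t / 2 - R t / (2 * ε))
      - (ε * s / 2 - R s / (2 * ε)) := this
    _ = Real.sqrt (N s) + ε * (t - s) / 2 + (R s - R t) / (2 * ε) + δ := by ring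

/-- Sublinear growth of second moments: if `R` is a nonincreasing nonnegative
risk and `(d/dt)√(N t) ≤ |R'(t)|^{1/2}`, then `N t / t → 0`. -/
theorem stmt0
    (N R : ℝ → ℝ)
    (hN0 : ∀ t, 0 ≤ N t) (hR0 : ∀ t, 0 ≤ R t)
    (hNdiff : Differentiable ℝ N) (hRdiff : Differentiable ℝ R)
    (hRmono : Antitone R)
    (hdissip : ∀ t > (0 : ℝ),
      deriv (fun s => Real.sqrt (N s)) t ≤ Real.sqrt |deriv R t|) :
    Tendsto (fun t => N t / t) atTop (nhds 0) := by
  set L : ℝ := ⨅ u, R u with hLdef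
  have hbdd : BddBelow (Set.range R) := ⟨0, fun x ⟨u, hu⟩ => hu ▸ hR0 u⟩
  have hRtend : Tendsto R atTop (𝓝 L) := tendsto_atTop_ciInf hRmono hbdd
  have hLle : ∀ u, L ≤ R u := fun u => ciInf_le hbdd u
  -- show g t = √(N t)/√t → 0
  have hg : Tendsto (fun t => Real.sqrt (N t) / Real.sqrt t) atTop (𝓝 0) := by
    rw [Metric.tendsto_atTop]
    intro η hη
    obtain ⟨s₀, hs₀⟩ := Metric.tendsto_atTop.1 hRtend (η ^ 2 / 4) (by positivity)
    set s : ℝ := max s₀ 1 with hsdef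
    have hs1 : (1 : ℝ) ≤ s := le_max_right _ _
    have hs0 : (0 : ℝ) < s := lt_of_lt_of_le one_pos hs1
    have hRs : R s - L < η ^ 2 / 4 := by
      have := hs₀ s (le_max_left _ _)
      rw [Real.dist_eq, abs_of_nonneg (by linarith [hLle s])] at this
      exact this
    set T : ℝ := max (s + 1) ((4 * Real.sqrt (N s) / η) ^ 2 + 1) with hTdef
    refine ⟨T, fun t ht => ?_⟩
    have hts : s + 1 ≤ t := le_trans (le_max_left _ _) ht
    have ht1 : (1 : ℝ) < t := by linarith
    have ht0 : (0 : ℝ) < t := by linarith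
    have hst : Real.sqrt t > 0 := Real.sqrt_pos.2 ht0
    have hsqt1 : (1 : ℝ) < Real.sqrt t := by
      have := Real.lt_sqrt (x := 1) (y := t) (by norm_num)
      simpa using this.2 (by nlinarith)
    set ε : ℝ := η / (4 * Real.sqrt t) with hεdef
    have hε : 0 < ε := by positivity
    have hkey := key_lemma N R hN0 hNdiff hRdiff hRmono hdissip ε hε s t hs0 (by linarith)
    have hsq : Real.sqrt t * Real.sqrt t = t := Real.mul_self_sqrt (le_of_lt ht0)
    have h1 : ε * (t - s) / 2 ≤ η * Real.sqrt t / 8 := by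
      rw [hεdef]
      rw [div_mul_eq_mul_div, div_div]
      rw [div_le_div_iff₀ (by positivity) (by norm_num)]
      nlinarith [hst, hη, hs0]
    have h2 : (R s - R t) / (2 * ε) < η * Real.sqrt t / 2 := by
      have hRst : R s - R t ≤ R s - L := by linarith [hLle t]
      have hnum : R s - R t < η ^ 2 / 4 := lt_of_le_of_lt hRst hRs
      have h2e : 2 * ε = η / (2 * Real.sqrt t) := by
        rw [hεdef]; field_simp; ring
      rw [h2e, div_div_eq_mul_div, div_lt_iff₀ hη]
      nlinarith [hst, hη]
    have h3 : Real.sqrt (N s) / Real.sqrt t < η / 4 := by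
      have hT2 : (4 * Real.sqrt (N s) / η) ^ 2 + 1 ≤ t := le_trans (le_max_right _ _) ht
      have ha : (0:ℝ) ≤ 4 * Real.sqrt (N s) / η := by positivity
      have h4 : 4 * Real.sqrt (N s) / η < Real.sqrt t := by
        have h5 := Real.sqrt_lt_sqrt (sq_nonneg (4 * Real.sqrt (N s) / η))
          (lt_of_lt_of_le (lt_add_one _) hT2)
        rwa [Real.sqrt_sq ha] at h5
      have h6 := (div_lt_iff₀ hη).1 h4
      rw [div_lt_iff₀ hst]
      linarith
    have hgt : Real.sqrt (N t) / Real.sqrt t < η := by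
      have h7 := (div_lt_iff₀ hst).1 h3
      rw [div_lt_iff₀ hst]
      nlinarith [hst, hη]
    rw [Real.dist_eq, sub_zero, abs_of_nonneg (by positivity)]
    exact hgt
  have hsqr : Tendsto (fun t => (Real.sqrt (N t) / Real.sqrt t) *
      (Real.sqrt (N t) / Real.sqrt t)) atTop (𝓝 0) := by
    have := hg.mul hg
    simpa using this
  refine hsqr.congr' ?_
  filter_upwards [eventually_ge_atTop (1 : ℝ)] with t ht
  have ht0 : (0 : ℝ) < t := by linarith
  rw [div_mul_div_comm, Real.mul_self_sqrt (hN0 t), Real.mul_self_sqrt (le_of_lt ht0)]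
end

section
/- Let E : [0,∞) → [0,∞) be nonincreasing with limsup_{s→∞} s^{γ} E(s) = ∞ for all γ > γ₀. If A : [0,∞) → [0,∞) satisfies A(t) ≤ C(1 + t^{β}) for some β ∈ (0,1), then limsup_{t→∞} t^{γ} E(A(t)) = ∞ for every γ > β·γ₀. -/
open Real Filter

/-- Quantified transfer: if the norm bound grows like `t^β` with `β ∈ (0,1)`,
the slow-approximation exponent `γ₀` transfers to the exponent `β·γ₀` in time. -/
theorem stmt12
    (A E : ℝ → ℝ) (γ₀ β C : ℝ) (hγ₀ : 0 < γ₀) (hβ : 0 < β) (hβ1 : β < 1)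
    (hC : 0 < C)
    (hA0 : ∀ t, 0 ≤ A t)
    (hA : ∀ t : ℝ, 0 ≤ t → A t ≤ C * (1 + t ^ β))
    (hE0 : ∀ s, 0 ≤ E s)
    (hEmono : Antitone E)
    (hE : ∀ γ : ℝ, γ₀ < γ → ∀ M : ℝ, ∃ᶠ s in atTop, M ≤ s ^ γ * E s) :
    ∀ γ : ℝ, β * γ₀ < γ → ∀ M : ℝ, ∃ᶠ t in atTop, M ≤ t ^ γ * E (A t) := by
  intro γ hγ M
  have hβne : β ≠ 0 := ne_of_gt hβ
  set γ' : ℝ := γ / β with hγ'def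
  have hγ' : γ₀ < γ' := (lt_div_iff₀ hβ).mpr (by linarith [mul_comm β γ₀])
  have hγ'pos : 0 < γ' := lt_trans hγ₀ hγ'
  have h2C : (0:ℝ) < 2 * C := by linarith
  have hpow2C : (0:ℝ) < (2 * C) ^ γ' := Real.rpow_pos_of_pos h2C γ'
  rw [frequently_atTop]
  intro T
  set T' : ℝ := max T 0 with hT'def
  have hT'0 : 0 ≤ T' := le_max_right _ _
  have hfreq := hE γ' hγ' (M * (2 * C) ^ γ')
  rw [frequently_atTop] at hfreq
  obtain ⟨s, hs, hsE⟩ := hfreq (max (2 * C) (C * (1 + T' ^ β)))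
  have hs2C : 2 * C ≤ s := le_trans (le_max_left _ _) hs
  have hsT : C * (1 + T' ^ β) ≤ s := le_trans (le_max_right _ _) hs
  have hspos : 0 < s := lt_of_lt_of_le h2C hs2C
  set x : ℝ := s / C - 1 with hxdef
  have hx0 : 0 ≤ x := by
    have : (2:ℝ) ≤ s / C := (le_div_iff₀ hC).mpr (by linarith)
    simp only [hxdef]; linarith
  have hxge : s / (2 * C) ≤ x := by
    have h1 : (1:ℝ) ≤ s / (2 * C) := (le_div_iff₀ h2C).mpr (by linarith)
    have h2 : s / C = s / (2 * C) + s / (2 * C) := by field_simp; ring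
    simp only [hxdef, h2]; linarith
  set t : ℝ := x ^ (1 / β) with htdef
  have ht0 : 0 ≤ t := Real.rpow_nonneg hx0 _
  have htβ : t ^ β = x := by
    rw [htdef, ← Real.rpow_mul hx0, one_div_mul_cancel hβne, Real.rpow_one]
  refine ⟨t, ?_, ?_⟩
  · -- t ≥ T
    have hxT' : T' ^ β ≤ x := by
      have : 1 + T' ^ β ≤ s / C := (le_div_iff₀ hC).mpr (by linarith [mul_comm C (1 + T' ^ β)])
      simp only [hxdef]; linarith
    have : T' = (T' ^ β) ^ (1 / β) := by
      rw [← Real.rpow_mul hT'0, mul_one_div_cancel hβne, Real.rpow_one]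
    calc T ≤ T' := le_max_left _ _
      _ = (T' ^ β) ^ (1 / β) := this
      _ ≤ x ^ (1 / β) := Real.rpow_le_rpow (Real.rpow_nonneg hT'0 _) hxT'
          (by positivity)
      _ = t := rfl
  · -- main estimate
    have hAt : A t ≤ s := by
      have := hA t ht0
      rw [htβ] at this
      have hCx : C * (1 + x) = s := by
        simp only [hxdef]; field_simp; ring
      linarith
    have hEAt : E s ≤ E (A t) := hEmono hAt
    have htγ : t ^ γ = x ^ γ' := by
      have hexp : 1 / β * γ = γ' := by rw [hγ'def]; field_simp
      rw [htdef, ← Real.rpow_mul hx0, hexp]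
    have hxpow : (s / (2 * C)) ^ γ' ≤ t ^ γ := by
      rw [htγ]
      exact Real.rpow_le_rpow (by positivity) hxge (le_of_lt hγ'pos)
    have hsplit : s ^ γ' = (2 * C) ^ γ' * (s / (2 * C)) ^ γ' := by
      rw [← Real.mul_rpow (le_of_lt h2C) (by positivity)]
      congr 1
      field_simp
    have key : (s / (2 * C)) ^ γ' * E s ≤ t ^ γ * E (A t) :=
      mul_le_mul hxpow hEAt (hE0 s) (by positivity)
    have : M * (2 * C) ^ γ' ≤ (2 * C) ^ γ' * (t ^ γ * E (A t)) := by
      calc M * (2 * C) ^ γ' ≤ s ^ γ' * E s := hsE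
        _ = (2 * C) ^ γ' * ((s / (2 * C)) ^ γ' * E s) := by rw [hsplit]; ring
        _ ≤ (2 * C) ^ γ' * (t ^ γ * E (A t)) := by
            exact mul_le_mul_of_nonneg_left key (le_of_lt hpow2C)
    have h2 : (2 * C) ^ γ' * M ≤ (2 * C) ^ γ' * (t ^ γ * E (A t)) := by
      rw [mul_comm ((2 * C) ^ γ') M]; exact this
    exact (mul_le_mul_iff_right₀ hpow2C).mp h2
end
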